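/- Precomposition functors satisfy the Beck–Chevalley condition for left Kan extensions: given a pullback square of small categories with f : Γ → Δ, π_{E'} : Δ.E' → Δ, π_E : Γ.E → Γ and q : Γ.E → Δ.E' (where Γ.E is the strict pullback of π_{E'} along f), and V a cocomplete category, the canonical natural transformation Lan_{π_E} ∘ q* → f* ∘ Lan_{π_{E'}} is a natural isomorphism, where Lan denotes left Kan extension. -/

import Mathlib

open CategoryTheory Limits Functor

universe u

namespace BCaux

variable {Γ Δ : Type u} [SmallCategory Γ] [SmallCategory Δ] (f : Γ ⥤ Δ)
variable (F : Δ ⥤ Cat.{u, u})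

@[simps]
def t (γ : Γ) :
    CostructuredArrow (Grothendieck.forget (f ⋙ F)) γ ⥤
      CostructuredArrow (Grothendieck.forget F) (f.obj γ) where
  obj X := CostructuredArrow.mk (Y := (Grothendieck.pre F f).obj X.left) (f.map X.hom)
  map {X Y} h := CostructuredArrow.homMk ((Grothendieck.pre F f).map h.left)
    (by
      show f.map h.left.base ≫ f.map Y.hom = f.map X.hom
      erw [← f.map_comp]
      congr 1
      exact CostructuredArrow.w h)

instance t_final (γ : Γ) : (t f F γ).Final := by
  constructor
  intro d
  let x₀ : Grothendieck (f ⋙ F) := ⟨γ, (F.map d.hom).toFunctor.obj d.left.fiber⟩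
  let g₀ : d.left ⟶ (Grothendieck.pre F f).obj x₀ := ⟨d.hom, 𝟙 _⟩
  let j₀ : StructuredArrow d (t f F γ) :=
    StructuredArrow.mk (Y := CostructuredArrow.mk (Y := x₀) (𝟙 γ))
      (CostructuredArrow.homMk g₀ (by show d.hom ≫ f.map (𝟙 γ) = d.hom; simp))
  have key : ∀ j : StructuredArrow d (t f F γ), Zigzag j j₀ := by
    intro j
    have w₂ : j.hom.left.base ≫ f.map j.right.hom = d.hom := by
      exact CostructuredArrow.w j.hom
    set x := j.right.left with hx
    set u : x.base ⟶ γ := j.right.hom with hu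
    set g : d.left ⟶ (Grothendieck.pre F f).obj x := j.hom.left with hg
    let x₁ : Grothendieck (f ⋙ F) := ⟨γ, ((f ⋙ F).map u).toFunctor.obj x.fiber⟩
    let h : x ⟶ x₁ := ⟨u, 𝟙 _⟩
    let k₁ : j.right ⟶ CostructuredArrow.mk (Y := x₁) (𝟙 γ) :=
      CostructuredArrow.homMk h (Category.comp_id u)
    let j₁ : StructuredArrow d (t f F γ) := StructuredArrow.mk (j.hom ≫ (t f F γ).map k₁)
    let e₁ : j ⟶ j₁ := StructuredArrow.homMk k₁ rfl
    have pf : ((f ⋙ F).map (𝟙 γ)).toFunctor.obj x₀.fiber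
        = (F.map (f.map u)).toFunctor.obj ((F.map g.base).toFunctor.obj d.left.fiber) := by
      have h1 := Functor.congr_obj (congrArg Cat.Hom.toFunctor (F.map_comp g.base (f.map u))).symm d.left.fiber
      dsimp at h1 ⊢
      rw [f.map_id, F.map_id, h1]
      exact congrArg (fun m => (F.map m).toFunctor.obj d.left.fiber) w₂.symm
    let k : x₀ ⟶ x₁ := ⟨𝟙 γ, eqToHom pf ≫ (F.map (f.map u)).toFunctor.map g.fiber⟩
    let k₀ : CostructuredArrow.mk (S := Grothendieck.forget (f ⋙ F)) (Y := x₀) (𝟙 γ) ⟶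
        CostructuredArrow.mk (S := Grothendieck.forget (f ⋙ F)) (Y := x₁) (𝟙 γ) :=
      CostructuredArrow.homMk k (Category.id_comp _)
    let e₀ : j₀ ⟶ j₁ := StructuredArrow.homMk k₀ (by
      apply CostructuredArrow.hom_ext
      dsimp [j₀, j₁, k₀, k₁]
      apply Grothendieck.ext
      case w_base =>
        show d.hom ≫ f.map (𝟙 γ) = g.base ≫ f.map u
        simp
        exact w₂.symm
      case w_fiber =>
        dsimp [t, g₀, k, h, CostructuredArrow.homMk]
        simp [eqToHom_map]
        show eqToHom _ ≫ eqToHom _ ≫ (F.map (f.map (𝟙 γ))).toFunctor.map (𝟙 ((F.map d.hom).toFunctor.obj d.left.fiber)) ≫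
          eqToHom pf ≫ (F.map (f.map u)).toFunctor.map g.fiber = eqToHom _ ≫ (F.map (f.map u)).toFunctor.map g.fiber ≫ 𝟙 _
        simp
        erw [eqToHom_trans_assoc, eqToHom_trans_assoc]
      )
    exact Relation.ReflTransGen.tail (Relation.ReflTransGen.single (Or.inl ⟨e₁⟩)) (Or.inr ⟨e₀⟩)
  have : Nonempty (StructuredArrow d (t f F γ)) := ⟨j₀⟩
  exact zigzag_isConnected fun a b => (key a).trans (zigzag_symm.symm _ _ (key b))



section
variable (V : Type (u + 1)) [Category.{u} V] [HasColimitsOfSize.{u, u} V]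
variable (P : Grothendieck F ⥤ V)

noncomputable def alphaP : (Grothendieck.pre F f ⋙ P) ⟶
    Grothendieck.forget (f ⋙ F) ⋙ (f ⋙ (Grothendieck.forget F).lan.obj P) :=
  whiskerLeft (Grothendieck.pre F f) ((Grothendieck.forget F).lanUnit.app P)

noncomputable def ptwise :
    (LeftExtension.mk (f ⋙ (Grothendieck.forget F).lan.obj P)
      (alphaP f F V P)).IsPointwiseLeftKanExtension := by
  intro γ
  have hP := isPointwiseLeftKanExtensionOfIsLeftKanExtension
    ((Grothendieck.forget F).lan.obj P) ((Grothendieck.forget F).lanUnit.app P)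
  exact (Final.isColimitWhiskerEquiv (t f F γ) _).symm (hP (f.obj γ))

instance : (f ⋙ (Grothendieck.forget F).lan.obj P).IsLeftKanExtension (alphaP f F V P) :=
  (ptwise f F V P).isLeftKanExtension

end

end BCaux

open BCaux in
/-- Beck–Chevalley for left Kan extensions along precomposition: Let
`f : Γ ⥤ Δ` be a functor of small categories and `E' : Δ ⥤ Gpd` a groupoid-valued
functor, so that `π_{E'} = forget : Δ.E' ⥤ Δ` is a Grothendieck (op)fibration, and let
`Γ.E` be the strict pullback of `π_{E'}` along `f` (the Grothendieck construction of
`f ⋙ E'`), with `π_E : Γ.E ⥤ Γ` and `q : Γ.E ⥤ Δ.E'`.  For a cocomplete category `V`,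
the canonical natural transformation `Lan_{π_E} ∘ q* ⟶ f* ∘ Lan_{π_{E'}}` (the mate of
the identification `π_{E'}* ⋙ q* = f* ⋙ π_E*` coming from the commuting square) is a
natural isomorphism. -/
theorem beck_chevalley_lan
    (Γ Δ : Type u) [SmallCategory Γ] [SmallCategory Δ] (f : Γ ⥤ Δ)
    (E' : Δ ⥤ Grpd.{u, u})
    (V : Type (u + 1)) [Category.{u} V] [HasColimitsOfSize.{u, u} V] :
    IsIso
      ((mateEquiv
          (Functor.lanAdjunction (Grothendieck.forget (E' ⋙ Grpd.forgetToCat)) V)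
          (Functor.lanAdjunction (Grothendieck.forget (f ⋙ E' ⋙ Grpd.forgetToCat)) V)
          (G := (whiskeringLeft _ _ V).obj (Grothendieck.pre (E' ⋙ Grpd.forgetToCat) f))
          (H := (whiskeringLeft Γ Δ V).obj f)).symm
        (eqToHom rfl)) := by
  set F : Δ ⥤ Cat.{u, u} := E' ⋙ Grpd.forgetToCat with hF
  set σ := (mateEquiv
          (Functor.lanAdjunction (Grothendieck.forget F) V)
          (Functor.lanAdjunction (Grothendieck.forget (f ⋙ F)) V)
          (G := (whiskeringLeft _ _ V).obj (Grothendieck.pre F f))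
          (H := (whiskeringLeft Γ Δ V).obj f)).symm
        (TwoSquare.mk _ _ _ _ (𝟙 _)) with hσ
  have : ∀ P : Grothendieck F ⥤ V, IsIso (σ.app P) := by
    intro P
    have h := unit_mateEquiv
      (Functor.lanAdjunction (Grothendieck.forget F) V)
      (Functor.lanAdjunction (Grothendieck.forget (f ⋙ F)) V)
      (G := (whiskeringLeft _ _ V).obj (Grothendieck.pre F f))
      (H := (whiskeringLeft Γ Δ V).obj f) σ P
    rw [hσ, Equiv.apply_symm_apply] at h
    simp only [NatTrans.id_app, Category.comp_id] at h
    rw [← hσ] at h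
    rw [Functor.lanAdjunction_unit, Functor.lanAdjunction_unit] at h
    have comm : (Grothendieck.forget (f ⋙ F)).lanUnit.app
          (Grothendieck.pre F f ⋙ P) ≫
          whiskerLeft (Grothendieck.forget (f ⋙ F)) (σ.app P) = alphaP f F V P := by
      have h2 := h.symm
      simp only [Functor.comp_obj, Functor.id_obj, whiskeringLeft_obj_obj,
        Category.comp_id] at h2
      exact h2.trans (Category.comp_id _)
    have : IsIso (X := (Grothendieck.forget (f ⋙ F)).lan.obj (Grothendieck.pre F f ⋙ P))
        (Y := f ⋙ (Grothendieck.forget F).lan.obj P) (σ.app P) := by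
      rw [← isLeftKanExtension_iff_isIso
        (show (Grothendieck.forget (f ⋙ F)).lan.obj (Grothendieck.pre F f ⋙ P) ⟶
            f ⋙ (Grothendieck.forget F).lan.obj P from σ.app P)
        ((Grothendieck.forget (f ⋙ F)).lanUnit.app (Grothendieck.pre F f ⋙ P))
        (alphaP f F V P) comm]
      infer_instance
    exact this
  exact NatIso.isIso_of_isIso_app σ
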